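/- Let n and t be natural numbers with 1 ≤ t ≤ n, and define the Rent-or-Buy cost function f : ℕ → ℝ by f(c) = c/t for 0 ≤ c ≤ t and f(c) = 1 for c > t. Then for every c with 1 ≤ c ≤ n, (1/f(c)) ∑_{j=1}^{c} f(j)/j ≤ 1 + ln(n/t). -/

import Mathlib

lemma aux_harmonic_tail (t : ℕ) (ht : 1 ≤ t) :
    ∀ c : ℕ, t ≤ c →
      ∑ j ∈ Finset.Icc (t + 1) c, (1 : ℝ) / j ≤ Real.log c - Real.log t := by
  intro c hc
  induction c with
  | zero => omega
  | succ m ih =>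
    rcases Nat.lt_or_ge t (m + 1) with h | h
    · have hm : t ≤ m := by omega
      have hsum : ∑ j ∈ Finset.Icc (t + 1) (m + 1), (1 : ℝ) / j
          = (∑ j ∈ Finset.Icc (t + 1) m, (1 : ℝ) / j) + 1 / ((m : ℝ) + 1) := by
        rw [Finset.sum_Icc_succ_top (by omega)]
        push_cast
        ring
      have hm0 : (0 : ℝ) < m := by exact_mod_cast Nat.lt_of_lt_of_le ht hm
      have hstep : (1 : ℝ) / ((m : ℝ) + 1) ≤ Real.log ((m : ℝ) + 1) - Real.log m := by
        have hx : (0 : ℝ) < (m : ℝ) / ((m : ℝ) + 1) := by positivity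
        have h2 := Real.log_le_sub_one_of_pos hx
        rw [Real.log_div (ne_of_gt hm0) (by positivity)] at h2
        have h1 : (m : ℝ) / ((m : ℝ) + 1) - 1 = -(1 / ((m : ℝ) + 1)) := by
          field_simp
          ring
        linarith
      have h3 := ih hm
      rw [hsum]
      push_cast
      linarith
    · have : t = m + 1 := by omega
      subst this
      simp

/-- for the Rent-or-Buy cost function with breakpoint `t` out of `n`
(`f c = c/t` for `c ≤ t`, `f c = 1` otherwise), for every `1 ≤ c ≤ n` we have
`(1/f(c)) ∑_{j=1}^c f(j)/j ≤ 1 + ln(n/t)`. -/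
theorem rentOrBuy_ratio_bound (n t : ℕ) (ht : 1 ≤ t) (htn : t ≤ n)
    (f : ℕ → ℝ) (hf : ∀ m : ℕ, f m = if m ≤ t then (m : ℝ) / t else 1)
    (c : ℕ) (hc1 : 1 ≤ c) (hcn : c ≤ n) :
    (1 / f c) * ∑ j ∈ Finset.Icc 1 c, f j / (j : ℝ)
      ≤ 1 + Real.log ((n : ℝ) / t) := by
  have ht0 : (0 : ℝ) < t := by exact_mod_cast ht
  have hn0 : (0 : ℝ) < n := by exact_mod_cast Nat.lt_of_lt_of_le ht htn
  have hlog0 : 0 ≤ Real.log ((n : ℝ) / t) := by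
    apply Real.log_nonneg
    rw [le_div_iff₀ ht0]
    simpa using (by exact_mod_cast htn : (t : ℝ) ≤ n)
  rcases le_or_gt c t with hct | htc
  · -- c ≤ t : each term f j / j = 1/t, sum = c/t, f c = c/t
    have hfc : f c = (c : ℝ) / t := by rw [hf]; simp [hct]
    have hsum : ∑ j ∈ Finset.Icc 1 c, f j / (j : ℝ) = (c : ℝ) / t := by
      have : ∀ j ∈ Finset.Icc 1 c, f j / (j : ℝ) = 1 / (t : ℝ) := by
        intro j hj
        simp only [Finset.mem_Icc] at hj
        have hj0 : (0 : ℝ) < j := by exact_mod_cast hj.1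
        rw [hf, if_pos (le_trans hj.2 hct)]
        field_simp
      rw [Finset.sum_congr rfl this]
      simp [Nat.card_Icc]
      ring
    rw [hfc, hsum]
    have hc0 : (0 : ℝ) < c := by exact_mod_cast hc1
    rw [one_div, inv_mul_cancel₀ (by positivity)]
    linarith
  · -- c > t
    have hfc : f c = 1 := by rw [hf, if_neg (by omega)]
    have hsplit : Finset.Icc 1 c = Finset.Icc 1 t ∪ Finset.Icc (t + 1) c := by
      ext x; simp only [Finset.mem_union, Finset.mem_Icc]; omega
    have hdisj : Disjoint (Finset.Icc 1 t) (Finset.Icc (t + 1) c) := by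
      rw [Finset.disjoint_left]
      intro x hx hx'
      simp only [Finset.mem_Icc] at hx hx'
      omega
    have hsum1 : ∑ j ∈ Finset.Icc 1 t, f j / (j : ℝ) = 1 := by
      have : ∀ j ∈ Finset.Icc 1 t, f j / (j : ℝ) = 1 / (t : ℝ) := by
        intro j hj
        simp only [Finset.mem_Icc] at hj
        have hj0 : (0 : ℝ) < j := by exact_mod_cast hj.1
        rw [hf, if_pos hj.2]
        field_simp
      rw [Finset.sum_congr rfl this]
      simp [Nat.card_Icc]
      field_simp
    have hsum2 : ∑ j ∈ Finset.Icc (t + 1) c, f j / (j : ℝ)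
        = ∑ j ∈ Finset.Icc (t + 1) c, (1 : ℝ) / j := by
      apply Finset.sum_congr rfl
      intro j hj
      simp only [Finset.mem_Icc] at hj
      rw [hf, if_neg (by omega)]
    have htail := aux_harmonic_tail t ht c (le_of_lt htc)
    have hmono : Real.log (c : ℝ) ≤ Real.log (n : ℝ) :=
      Real.log_le_log (by exact_mod_cast Nat.lt_of_lt_of_le ht (le_of_lt htc)) (by exact_mod_cast hcn)
    rw [hfc, hsplit, Finset.sum_union hdisj, hsum1, hsum2]
    rw [Real.log_div (ne_of_gt hn0) (ne_of_gt ht0)]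
    simp only [one_div, inv_one, one_mul]
    calc (1 : ℝ) + ∑ j ∈ Finset.Icc (t + 1) c, ((j : ℝ))⁻¹
        ≤ 1 + (Real.log c - Real.log t) := by
          have : ∑ j ∈ Finset.Icc (t + 1) c, ((j : ℝ))⁻¹
              = ∑ j ∈ Finset.Icc (t + 1) c, (1 : ℝ) / j := by
            simp [one_div]
          rw [this]; linarith
      _ ≤ 1 + (Real.log n - Real.log t) := by linarith
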